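/- arXiv:1202.4338 — 2 statements merged into one kernel-verified Lean document; each statement's English description precedes it below -/
import Mathlib

section
/- Let d ≥ 1, ω ≥ 0 and M > 0. Let 𝒜 = (A_k)_{k∈ℤ+} be a sequence of linear isomorphisms of ℝ^d such that ‖A_k‖ ≤ M and ‖A_k⁻¹‖ ≤ M for all k ∈ ℤ+. If 𝒜 is hyperbolic on ℤ+, then 𝒜 has Perron property B_ω(ℤ+): for every sequence f ∈ N_ω(ℤ+) with f_0 = 0 there exists a sequence x ∈ N_ω(ℤ+) satisfying x_{k+1} = A_k x_k + f_{k+1} for all k ≥ 0. -/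
noncomputable section

open Filter Topology

/-- `ℝ^d`. -/
abbrev Ed (d : ℕ) := EuclideanSpace ℝ (Fin d)

/-- The weight `(|k| + 1) ^ ω`. -/
noncomputable def wt (ω : ℝ) (k : ℤ) : ℝ := (|(k : ℝ)| + 1) ^ ω

/-- `PhiNat A l n = A (l+n-1) ∘ … ∘ A l`. -/
noncomputable def PhiNat {d : ℕ} (A : ℤ → (Ed d ≃L[ℝ] Ed d)) (l : ℤ) :
    ℕ → (Ed d ≃L[ℝ] Ed d)
  | 0 => ContinuousLinearEquiv.refl ℝ (Ed d)
  | n + 1 => (PhiNat A l n).trans (A (l + n))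

/-- The Cauchy matrix `Φ_{m,l}`. -/
noncomputable def Phi {d : ℕ} (A : ℤ → (Ed d ≃L[ℝ] Ed d)) (m l : ℤ) : Ed d ≃L[ℝ] Ed d :=
  if l ≤ m then PhiNat A l (m - l).toNat else (PhiNat A m (l - m).toNat).symm

/-- Hyperbolicity on `I` with explicit data. -/
def HyperbolicOnWith {d : ℕ} (A : ℤ → (Ed d ≃L[ℝ] Ed d)) (I : Set ℤ) (K lam : ℝ)
    (P Q : ℤ → (Ed d →L[ℝ] Ed d)) : Prop :=
  0 < K ∧ 0 < lam ∧ lam < 1 ∧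
  (∀ k ∈ I, P k + Q k = 1) ∧
  (∀ k ∈ I, (P k).comp (P k) = P k ∧ (Q k).comp (Q k) = Q k) ∧
  (∀ k ∈ I, IsCompl (LinearMap.range (P k : Ed d →ₗ[ℝ] Ed d)) (LinearMap.range (Q k : Ed d →ₗ[ℝ] Ed d))) ∧
  (∀ k ∈ I, k + 1 ∈ I →
      (A k) '' (LinearMap.range (P k : Ed d →ₗ[ℝ] Ed d) : Set (Ed d)) = (LinearMap.range (P (k + 1) : Ed d →ₗ[ℝ] Ed d) : Set (Ed d)) ∧
      (A k) '' (LinearMap.range (Q k : Ed d →ₗ[ℝ] Ed d) : Set (Ed d)) = (LinearMap.range (Q (k + 1) : Ed d →ₗ[ℝ] Ed d) : Set (Ed d))) ∧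
  (∀ l ∈ I, ∀ k ∈ I, l ≤ k → ∀ v ∈ LinearMap.range (P l : Ed d →ₗ[ℝ] Ed d),
      ‖(Phi A k l) v‖ ≤ K * lam ^ (k - l).toNat * ‖v‖) ∧
  (∀ l ∈ I, ∀ k ∈ I, k ≤ l → ∀ v ∈ LinearMap.range (Q l : Ed d →ₗ[ℝ] Ed d),
      ‖(Phi A k l) v‖ ≤ K * lam ^ (l - k).toNat * ‖v‖) ∧
  (∀ k ∈ I, ‖P k‖ ≤ K ∧ ‖Q k‖ ≤ K)

/-- The sequence `A` is hyperbolic on `I`. -/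
def IsHyperbolicOn {d : ℕ} (A : ℤ → (Ed d ≃L[ℝ] Ed d)) (I : Set ℤ) : Prop :=
  ∃ (K lam : ℝ) (P Q : ℤ → (Ed d →L[ℝ] Ed d)), HyperbolicOnWith A I K lam P Q

/-- Perron property `B_ω(ℤ+)`. -/
def PerronBPos {d : ℕ} (ω : ℝ) (A : ℤ → (Ed d ≃L[ℝ] Ed d)) : Prop :=
  ∀ f : ℤ → Ed d, f 0 = 0 → (∃ C : ℝ, ∀ k : ℤ, 0 ≤ k → ‖f k‖ * wt ω k ≤ C) →
    ∃ x : ℤ → Ed d, (∃ C : ℝ, ∀ k : ℤ, 0 ≤ k → ‖x k‖ * wt ω k ≤ C) ∧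
      ∀ k : ℤ, 0 ≤ k → x (k + 1) = A k (x k) + f (k + 1)

/-- Perron property `B_ω(ℤ)`. -/
def PerronBZ {d : ℕ} (ω : ℝ) (A : ℤ → (Ed d ≃L[ℝ] Ed d)) : Prop :=
  ∀ f : ℤ → Ed d, (∃ C : ℝ, ∀ k : ℤ, ‖f k‖ * wt ω k ≤ C) →
    ∃ x : ℤ → Ed d, (∃ C : ℝ, ∀ k : ℤ, ‖x k‖ * wt ω k ≤ C) ∧
      ∀ k : ℤ, x (k + 1) = A k (x k) + f (k + 1)

/-- `B^+(𝒜)`. -/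
def Bplus {d : ℕ} (A : ℤ → (Ed d ≃L[ℝ] Ed d)) : Set (Ed d) :=
  {v | Tendsto (fun k : ℤ => ‖(Phi A k 0) v‖) atTop (𝓝 0)}

/-- `B^-(𝒜)`. -/
def Bminus {d : ℕ} (A : ℤ → (Ed d ≃L[ℝ] Ed d)) : Set (Ed d) :=
  {v | Tendsto (fun k : ℤ => ‖(Phi A k 0) v‖) atBot (𝓝 0)}

namespace PerronAux

variable {d : ℕ}

lemma phiNat_succ' (A : ℤ → (Ed d ≃L[ℝ] Ed d)) (l : ℤ) (n : ℕ) (x : Ed d) :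
    PhiNat A l (n + 1) x = A (l + n) (PhiNat A l n x) := by
  simp [PhiNat]

lemma phiNat_succ_left (A : ℤ → (Ed d ≃L[ℝ] Ed d)) (l : ℤ) (n : ℕ) :
    PhiNat A l (n + 1) = (A l).trans (PhiNat A (l + 1) n) := by
  induction n with
  | zero => ext x; simp [PhiNat]
  | succ n ih =>
    ext x
    rw [phiNat_succ', ih]
    have e : (l + ((n : ℤ) + 1)) = (l + 1) + n := by ring
    push_cast
    rw [e]
    simp [ContinuousLinearEquiv.trans_apply, phiNat_succ']

lemma phi_self (A : ℤ → (Ed d ≃L[ℝ] Ed d)) (k : ℤ) (x : Ed d) : Phi A k k x = x := by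
  simp [Phi, PhiNat]

lemma phi_succ (A : ℤ → (Ed d ≃L[ℝ] Ed d)) (k l : ℤ) (x : Ed d) :
    A k (Phi A k l x) = Phi A (k + 1) l x := by
  rcases le_or_gt l k with h | h
  · have h1 : l ≤ k + 1 := by omega
    have h2 : (k + 1 - l).toNat = (k - l).toNat + 1 := by omega
    rw [Phi, Phi, if_pos h, if_pos h1, h2, phiNat_succ']
    have h3 : (l + ((k - l).toNat : ℤ)) = k := by omega
    rw [h3]
  · have h1 : (l - k).toNat = (l - (k + 1)).toNat + 1 := by omega
    rw [Phi, if_neg (by omega), h1, phiNat_succ_left]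
    have h2 : A k (((A k).trans (PhiNat A (k + 1) (l - (k + 1)).toNat)).symm x)
        = (PhiNat A (k + 1) (l - (k + 1)).toNat).symm x := by
      simp [ContinuousLinearEquiv.symm_trans_apply]
    rw [h2, Phi]
    rcases le_or_gt l (k + 1) with h3 | h3
    · have : l = k + 1 := by omega
      subst this
      simp [PhiNat]
    · rw [if_neg (by omega)]

lemma wt_pos (ω : ℝ) (k : ℤ) : 0 < wt ω k := by
  unfold wt; positivity

lemma one_le_wt {ω : ℝ} (hω : 0 ≤ ω) (k : ℤ) : 1 ≤ wt ω k :=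
  Real.one_le_rpow (by have := abs_nonneg ((k:ℝ)); linarith) hω

lemma wt_mono {ω : ℝ} (hω : 0 ≤ ω) {a b : ℤ} (ha : 0 ≤ a) (hab : a ≤ b) :
    wt ω a ≤ wt ω b := by
  unfold wt
  apply Real.rpow_le_rpow (by positivity) _ hω
  have h1 : |(a : ℝ)| = a := abs_of_nonneg (by exact_mod_cast ha)
  have h2 : |(b : ℝ)| = b := abs_of_nonneg (by exact_mod_cast (le_trans ha hab))
  rw [h1, h2]
  have : (a : ℝ) ≤ b := by exact_mod_cast hab
  linarith

lemma wt_key {ω : ℝ} (hω : 0 ≤ ω) {l k : ℤ} (hl : 0 ≤ l) (hlk : l ≤ k) :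
    wt ω k ≤ wt ω l * (((k - l).toNat : ℝ) + 1) ^ ω := by
  unfold wt
  rw [← Real.mul_rpow (by positivity) (by positivity)]
  apply Real.rpow_le_rpow (by positivity) _ hω
  have h1 : |(l : ℝ)| = l := abs_of_nonneg (by exact_mod_cast hl)
  have h2 : |(k : ℝ)| = k := abs_of_nonneg (by exact_mod_cast (le_trans hl hlk))
  have h3 : ((k - l).toNat : ℝ) = (k : ℝ) - l := by
    have : ((k - l).toNat : ℤ) = k - l := Int.toNat_of_nonneg (by omega)
    exact_mod_cast this
  rw [h1, h2, h3]
  have hl' : (0 : ℝ) ≤ (l : ℝ) := by exact_mod_cast hl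
  have hlk' : (l : ℝ) ≤ k := by exact_mod_cast hlk
  nlinarith [mul_nonneg hl' (sub_nonneg.mpr hlk')]

lemma summable_wt {lam ω : ℝ} (h0 : 0 < lam) (h1 : lam < 1) (hω : 0 ≤ ω) :
    Summable (fun m : ℕ => lam ^ m * ((m : ℝ) + 1) ^ ω) := by
  set N := ⌈ω⌉₊ with hN
  have hsum : Summable (fun n : ℕ => (n : ℝ) ^ N * lam ^ n) :=
    summable_pow_mul_geometric_of_norm_lt_one N
      (by rw [Real.norm_eq_abs, abs_of_pos h0]; exact h1)
  have hsh : Summable (fun n : ℕ => ((n : ℝ) + 1) ^ N * lam ^ (n + 1)) := by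
    have := (summable_nat_add_iff 1).mpr hsum
    simpa using this
  have hsh2 : Summable (fun n : ℕ => ((n : ℝ) + 1) ^ N * lam ^ n) := by
    refine (hsh.mul_left lam⁻¹).congr fun n => ?_
    field_simp
    ring
  refine Summable.of_nonneg_of_le (fun m => by positivity) (fun m => ?_) hsh2
  rw [mul_comm]
  have hb : (1 : ℝ) ≤ (m : ℝ) + 1 := by have : (0:ℝ) ≤ (m:ℝ) := Nat.cast_nonneg m; linarith
  have h : ((m : ℝ) + 1) ^ ω ≤ ((m : ℝ) + 1) ^ (N : ℝ) :=
    Real.rpow_le_rpow_of_exponent_le hb (Nat.le_ceil ω)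
  rw [Real.rpow_natCast] at h
  exact mul_le_mul_of_nonneg_right h (by positivity)

end PerronAux

namespace PerronAux

noncomputable def gSeq {d : ℕ} (A : ℤ → (Ed d ≃L[ℝ] Ed d)) (Q : ℤ → (Ed d →L[ℝ] Ed d))
    (f : ℤ → Ed d) (m j : ℤ) (n : ℕ) : Ed d :=
  (Phi A m (j + n)) ((Q (j + n)) (f (j + n)))

noncomputable def uSeq {d : ℕ} (A : ℤ → (Ed d ≃L[ℝ] Ed d)) (P : ℤ → (Ed d →L[ℝ] Ed d))
    (f : ℤ → Ed d) (k : ℤ) : Ed d :=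
  ∑ l ∈ Finset.range (k.toNat + 1), (Phi A k l) ((P l) (f l))

noncomputable def vSeq {d : ℕ} (A : ℤ → (Ed d ≃L[ℝ] Ed d)) (Q : ℤ → (Ed d →L[ℝ] Ed d))
    (f : ℤ → Ed d) (k : ℤ) : Ed d :=
  ∑' n : ℕ, gSeq A Q f k (k + 1) n

end PerronAux

open PerronAux in
/-- hyperbolicity on ℤ+ implies Perron property B_ω(ℤ+). -/
theorem hyperbolic_implies_perron_pos (d : ℕ) (hd : 1 ≤ d) (ω M : ℝ) (hω : 0 ≤ ω) (hM : 0 < M)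
    (A : ℤ → (Ed d ≃L[ℝ] Ed d))
    (hA : ∀ k : ℤ, 0 ≤ k → ‖(A k : Ed d →L[ℝ] Ed d)‖ ≤ M ∧
      ‖((A k).symm : Ed d →L[ℝ] Ed d)‖ ≤ M)
    (hhyp : IsHyperbolicOn A {k : ℤ | 0 ≤ k}) :
    ∀ f : ℤ → Ed d, f 0 = 0 → (∃ C : ℝ, ∀ k : ℤ, 0 ≤ k → ‖f k‖ * wt ω k ≤ C) →
      ∃ x : ℤ → Ed d, (∃ C : ℝ, ∀ k : ℤ, 0 ≤ k → ‖x k‖ * wt ω k ≤ C) ∧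
        ∀ k : ℤ, 0 ≤ k → x (k + 1) = A k (x k) + f (k + 1) := by
  obtain ⟨K, lam, P, Q, hK, hl0, hl1, hPQ, hidem, hcompl, hinv, hPest, hQest, hnorms⟩ := hhyp
  rintro f hf0 ⟨C, hfC⟩
  have hmemI : ∀ k : ℤ, 0 ≤ k → k ∈ {k : ℤ | 0 ≤ k} := fun k hk => hk
  have hC0 : 0 ≤ C := le_trans (mul_nonneg (norm_nonneg _) (wt_pos ω 0).le) (hfC 0 le_rfl)
  have hfb : ∀ k : ℤ, 0 ≤ k → ‖f k‖ ≤ C := by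
    intro k hk
    have h1 := hfC k hk
    have h2 := one_le_wt hω k
    nlinarith [norm_nonneg (f k)]
  -- norm bound for the Q-tail terms
  have hgle : ∀ m j : ℤ, 0 ≤ m → m ≤ j → ∀ n : ℕ,
      ‖gSeq A Q f m j n‖ ≤ (K ^ 2 * C) * lam ^ ((j - m).toNat + n) := by
    intro m j hm hj n
    have hjn : (0 : ℤ) ≤ j + n := by omega
    have hq : (Q (j + n)) (f (j + n)) ∈ LinearMap.range (Q (j + n) : Ed d →ₗ[ℝ] Ed d) := ⟨f (j + n), rfl⟩
    have h1 := hQest (j + n) (hmemI _ hjn) m (hmemI _ hm) (by omega) _ hq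
    have htn : (j + (n : ℤ) - m).toNat = (j - m).toNat + n := by omega
    rw [htn] at h1
    have h2 : ‖(Q (j + n)) (f (j + n))‖ ≤ K * C := by
      calc ‖(Q (j + n)) (f (j + n))‖ ≤ ‖Q (j + n)‖ * ‖f (j + n)‖ :=
            (Q (j + n)).le_opNorm _
        _ ≤ K * C := mul_le_mul (hnorms _ (hmemI _ hjn)).2 (hfb _ hjn)
            (norm_nonneg _) hK.le
    calc ‖gSeq A Q f m j n‖ ≤ K * lam ^ ((j - m).toNat + n) * ‖(Q (j + n)) (f (j + n))‖ := h1
      _ ≤ K * lam ^ ((j - m).toNat + n) * (K * C) := by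
          apply mul_le_mul_of_nonneg_left h2 (by positivity)
      _ = (K ^ 2 * C) * lam ^ ((j - m).toNat + n) := by ring
  have hgsumnorm : ∀ m j : ℤ, 0 ≤ m → m ≤ j →
      Summable (fun n : ℕ => ‖gSeq A Q f m j n‖) := by
    intro m j hm hj
    refine Summable.of_nonneg_of_le (fun n => norm_nonneg _) (fun n => hgle m j hm hj n) ?_
    have : Summable (fun n : ℕ => lam ^ n) := summable_geometric_of_lt_one hl0.le hl1
    refine ((this.mul_left ((K ^ 2 * C) * lam ^ ((j - m).toNat))).congr fun n => ?_)
    rw [pow_add]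
    ring
  have hgsum : ∀ m j : ℤ, 0 ≤ m → m ≤ j → Summable (fun n : ℕ => gSeq A Q f m j n) :=
    fun m j hm hj => (hgsumnorm m j hm hj).of_norm
  -- recursion for u
  have hu : ∀ k : ℤ, 0 ≤ k →
      uSeq A P f (k + 1) = A k (uSeq A P f k) + (P (k + 1)) (f (k + 1)) := by
    intro k hk
    have h1 : (k + 1).toNat = k.toNat + 1 := by omega
    have hmap : A k (uSeq A P f k)
        = ∑ l ∈ Finset.range (k.toNat + 1), (Phi A (k + 1) l) ((P l) (f l)) := by
      simp only [uSeq, map_sum]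
      exact Finset.sum_congr rfl fun l _ => phi_succ A k l _
    rw [hmap]
    simp only [uSeq, h1, Finset.sum_range_succ]
    congr 1
    have h2 : ((k.toNat + 1 : ℕ) : ℤ) = k + 1 := by omega
    rw [h2, phi_self]
  -- recursion for v
  have hv : ∀ k : ℤ, 0 ≤ k →
      A k (vSeq A Q f k) = (Q (k + 1)) (f (k + 1)) + vSeq A Q f (k + 1) := by
    intro k hk
    have hs : Summable (fun n : ℕ => gSeq A Q f k (k + 1) n) := hgsum k (k + 1) hk (by omega)
    have h1 : A k (vSeq A Q f k) = ∑' n : ℕ, A k (gSeq A Q f k (k + 1) n) := by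
      simp only [vSeq]
      exact ((hs.hasSum.mapL (A k : Ed d →L[ℝ] Ed d)).tsum_eq).symm
    have h2 : ∀ n : ℕ, A k (gSeq A Q f k (k + 1) n) = gSeq A Q f (k + 1) (k + 1) n := by
      intro n
      simp only [gSeq]
      exact phi_succ A k _ _
    have hs2 : Summable (fun n : ℕ => gSeq A Q f (k + 1) (k + 1) n) :=
      hgsum (k + 1) (k + 1) (by omega) le_rfl
    rw [h1]
    simp only [h2]
    rw [Summable.tsum_eq_zero_add hs2]
    congr 1
    · simp only [gSeq, Nat.cast_zero, add_zero]
      rw [phi_self]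
    · simp only [vSeq]
      refine tsum_congr fun n => ?_
      have e : (k + 1 + ((n + 1 : ℕ) : ℤ)) = (k + 1 + 1 + (n : ℤ)) := by push_cast; ring
      simp only [gSeq, e]
  -- summable weight series
  have hS : Summable (fun m : ℕ => lam ^ m * ((m : ℝ) + 1) ^ ω) := summable_wt hl0 hl1 hω
  set S : ℝ := ∑' m : ℕ, lam ^ m * ((m : ℝ) + 1) ^ ω with hSdef
  have hK2C : (0 : ℝ) ≤ K ^ 2 * C := mul_nonneg (by positivity) hC0
  have hubound : ∀ k : ℤ, 0 ≤ k → ‖uSeq A P f k‖ * wt ω k ≤ (K ^ 2 * C) * S := by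
    intro k hk
    have hterm : ∀ l ∈ Finset.range (k.toNat + 1),
        ‖(Phi A k l) ((P l) (f l))‖ * wt ω k
          ≤ (K ^ 2 * C) * (lam ^ (k.toNat - l) * ((↑(k.toNat - l) : ℝ) + 1) ^ ω) := by
      intro l hl
      have hlk : (l : ℤ) ≤ k := by
        have := Finset.mem_range.mp hl; omega
      have hl0' : (0 : ℤ) ≤ (l : ℤ) := Int.natCast_nonneg l
      have hp : (P l) (f l) ∈ LinearMap.range (P (l : ℤ) : Ed d →ₗ[ℝ] Ed d) := ⟨f l, rfl⟩
      have h1 := hPest l (hmemI _ hl0') k (hmemI _ hk) hlk _ hp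
      have htn : ((k - (l : ℤ)).toNat) = k.toNat - l := by omega
      rw [htn] at h1
      have h2 : ‖(P (l : ℤ)) (f l)‖ ≤ K * ‖f l‖ :=
        le_trans ((P (l : ℤ)).le_opNorm _)
          (mul_le_mul_of_nonneg_right (hnorms _ (hmemI _ hl0')).1 (norm_nonneg _))
      have h3 : ‖f l‖ * wt ω k ≤ C * ((↑(k.toNat - l) : ℝ) + 1) ^ ω := by
        have hwk := wt_key hω hl0' hlk
        rw [htn] at hwk
        calc ‖f l‖ * wt ω k
            ≤ ‖f l‖ * (wt ω l * ((↑(k.toNat - l) : ℝ) + 1) ^ ω) :=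
              mul_le_mul_of_nonneg_left hwk (norm_nonneg _)
          _ = (‖f l‖ * wt ω l) * ((↑(k.toNat - l) : ℝ) + 1) ^ ω := by ring
          _ ≤ C * ((↑(k.toNat - l) : ℝ) + 1) ^ ω :=
              mul_le_mul_of_nonneg_right (hfC l hl0')
                (Real.rpow_nonneg (by positivity) _)
      calc ‖(Phi A k l) ((P l) (f l))‖ * wt ω k
          ≤ (K * lam ^ (k.toNat - l) * (K * ‖f l‖)) * wt ω k := by
            apply mul_le_mul_of_nonneg_right _ (wt_pos ω k).le
            exact le_trans h1 (mul_le_mul_of_nonneg_left h2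
              (mul_nonneg hK.le (pow_nonneg hl0.le _)))
        _ = (K ^ 2 * lam ^ (k.toNat - l)) * (‖f l‖ * wt ω k) := by ring
        _ ≤ (K ^ 2 * lam ^ (k.toNat - l)) * (C * ((↑(k.toNat - l) : ℝ) + 1) ^ ω) :=
            mul_le_mul_of_nonneg_left h3 (mul_nonneg (by positivity) (pow_nonneg hl0.le _))
        _ = (K ^ 2 * C) * (lam ^ (k.toNat - l) * ((↑(k.toNat - l) : ℝ) + 1) ^ ω) := by ring
    calc ‖uSeq A P f k‖ * wt ω k
        ≤ (∑ l ∈ Finset.range (k.toNat + 1), ‖(Phi A k l) ((P l) (f l))‖) * wt ω k := by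
          apply mul_le_mul_of_nonneg_right _ (wt_pos ω k).le
          simp only [uSeq]
          exact norm_sum_le _ _
      _ = ∑ l ∈ Finset.range (k.toNat + 1), ‖(Phi A k l) ((P l) (f l))‖ * wt ω k :=
          Finset.sum_mul _ _ _
      _ ≤ ∑ l ∈ Finset.range (k.toNat + 1),
            (K ^ 2 * C) * (lam ^ (k.toNat - l) * ((↑(k.toNat - l) : ℝ) + 1) ^ ω) :=
          Finset.sum_le_sum hterm
      _ = (K ^ 2 * C) * ∑ l ∈ Finset.range (k.toNat + 1),
            lam ^ (k.toNat - l) * ((↑(k.toNat - l) : ℝ) + 1) ^ ω := by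
          rw [Finset.mul_sum]
      _ = (K ^ 2 * C) * ∑ m ∈ Finset.range (k.toNat + 1),
            lam ^ m * ((m : ℝ) + 1) ^ ω := by
          congr 1
          have := Finset.sum_range_reflect
            (fun m : ℕ => lam ^ m * ((m : ℝ) + 1) ^ ω) (k.toNat + 1)
          simpa using this
      _ ≤ (K ^ 2 * C) * S := by
          apply mul_le_mul_of_nonneg_left _ hK2C
          exact Summable.sum_le_tsum _
            (fun m _ => mul_nonneg (pow_nonneg hl0.le _)
              (Real.rpow_nonneg (by positivity) _)) hS
  have hvbound : ∀ k : ℤ, 0 ≤ k →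
      ‖vSeq A Q f k‖ * wt ω k ≤ (K ^ 2 * C) * (1 - lam)⁻¹ := by
    intro k hk
    have hsn := hgsumnorm k (k + 1) hk (by omega)
    have hterm : ∀ n : ℕ,
        ‖gSeq A Q f k (k + 1) n‖ * wt ω k ≤ (K ^ 2 * C) * lam ^ n := by
      intro n
      have hjn : (0 : ℤ) ≤ k + 1 + n := by omega
      have hq := hQest (k + 1 + n) (hmemI _ hjn) k (hmemI _ hk) (by omega) _
        ⟨f (k + 1 + n), rfl⟩
      have htn : (k + 1 + (n : ℤ) - k).toNat = n + 1 := by omega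
      rw [htn] at hq
      have h2 : ‖(Q (k + 1 + n)) (f (k + 1 + n))‖ ≤ K * ‖f (k + 1 + n)‖ :=
        le_trans ((Q _).le_opNorm _)
          (mul_le_mul_of_nonneg_right (hnorms _ (hmemI _ hjn)).2 (norm_nonneg _))
      have h3 : ‖f (k + 1 + n)‖ * wt ω k ≤ C := by
        calc ‖f (k + 1 + n)‖ * wt ω k ≤ ‖f (k + 1 + n)‖ * wt ω (k + 1 + n) :=
              mul_le_mul_of_nonneg_left (wt_mono hω hk (by omega)) (norm_nonneg _)
          _ ≤ C := hfC _ hjn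
      have h4 : lam ^ (n + 1) ≤ lam ^ n := by
        rw [pow_succ]
        nlinarith [pow_pos hl0 n]
      calc ‖gSeq A Q f k (k + 1) n‖ * wt ω k
          ≤ (K * lam ^ (n + 1) * (K * ‖f (k + 1 + n)‖)) * wt ω k := by
            apply mul_le_mul_of_nonneg_right _ (wt_pos ω k).le
            simp only [gSeq]
            exact le_trans hq (mul_le_mul_of_nonneg_left h2
              (mul_nonneg hK.le (pow_nonneg hl0.le _)))
        _ = (K ^ 2 * lam ^ (n + 1)) * (‖f (k + 1 + n)‖ * wt ω k) := by ring
        _ ≤ (K ^ 2 * lam ^ (n + 1)) * C :=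
            mul_le_mul_of_nonneg_left h3 (mul_nonneg (by positivity) (pow_nonneg hl0.le _))
        _ = (K ^ 2 * C) * lam ^ (n + 1) := by ring
        _ ≤ (K ^ 2 * C) * lam ^ n := mul_le_mul_of_nonneg_left h4 hK2C
    calc ‖vSeq A Q f k‖ * wt ω k
        ≤ (∑' n : ℕ, ‖gSeq A Q f k (k + 1) n‖) * wt ω k := by
          apply mul_le_mul_of_nonneg_right _ (wt_pos ω k).le
          simp only [vSeq]
          exact norm_tsum_le_tsum_norm hsn
      _ = ∑' n : ℕ, ‖gSeq A Q f k (k + 1) n‖ * wt ω k := tsum_mul_right.symm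
      _ ≤ ∑' n : ℕ, (K ^ 2 * C) * lam ^ n :=
          Summable.tsum_le_tsum hterm (hsn.mul_right _)
            ((summable_geometric_of_lt_one hl0.le hl1).mul_left _)
      _ = (K ^ 2 * C) * (1 - lam)⁻¹ := by
          rw [tsum_mul_left, tsum_geometric_of_lt_one hl0.le hl1]
  refine ⟨fun k => uSeq A P f k - vSeq A Q f k,
    ⟨(K ^ 2 * C) * S + (K ^ 2 * C) * (1 - lam)⁻¹, ?_⟩, ?_⟩
  · intro k hk
    calc ‖uSeq A P f k - vSeq A Q f k‖ * wt ω k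
        ≤ (‖uSeq A P f k‖ + ‖vSeq A Q f k‖) * wt ω k :=
          mul_le_mul_of_nonneg_right (norm_sub_le _ _) (wt_pos ω k).le
      _ = ‖uSeq A P f k‖ * wt ω k + ‖vSeq A Q f k‖ * wt ω k := add_mul _ _ _
      _ ≤ (K ^ 2 * C) * S + (K ^ 2 * C) * (1 - lam)⁻¹ :=
          add_le_add (hubound k hk) (hvbound k hk)
  · intro k hk
    show uSeq A P f (k + 1) - vSeq A Q f (k + 1)
        = A k (uSeq A P f k - vSeq A Q f k) + f (k + 1)
    have h1 := hu k hk
    have h2 := hv k hk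
    have hone : (P (k + 1)) (f (k + 1)) + (Q (k + 1)) (f (k + 1)) = f (k + 1) := by
      have h := hPQ (k + 1) (hmemI _ (by omega))
      have h' := congrArg (fun T : Ed d →L[ℝ] Ed d => T (f (k + 1))) h
      simpa using h'
    have h2' : vSeq A Q f (k + 1)
        = A k (vSeq A Q f k) - (Q (k + 1)) (f (k + 1)) := by
      rw [h2]; abel
    have hAk : A k (uSeq A P f k - vSeq A Q f k)
        = A k (uSeq A P f k) - A k (vSeq A Q f k) := map_sub _ _ _
    calc uSeq A P f (k + 1) - vSeq A Q f (k + 1)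
        = (A k (uSeq A P f k) + (P (k + 1)) (f (k + 1)))
            - (A k (vSeq A Q f k) - (Q (k + 1)) (f (k + 1))) := by rw [h1, h2']
      _ = A k (uSeq A P f k - vSeq A Q f k)
            + ((P (k + 1)) (f (k + 1)) + (Q (k + 1)) (f (k + 1))) := by rw [hAk]; abel
      _ = A k (uSeq A P f k - vSeq A Q f k) + f (k + 1) := by rw [hone]
end
end

section
/- Let d ≥ 1, ω ≥ 0 and M > 0. Let 𝒜 = (A_k)_{k∈ℤ} be a sequence of linear isomorphisms of ℝ^d such that ‖A_k‖ ≤ M and ‖A_k⁻¹‖ ≤ M for all k ∈ ℤ. If 𝒜 is hyperbolic on both ℤ+ and ℤ− and B^+(𝒜) + B^−(𝒜) = ℝ^d, then 𝒜 has Perron property B_ω(ℤ): for every f ∈ N_ω(ℤ) there exists x ∈ N_ω(ℤ) with x_{k+1} = A_k x_k + f_{k+1} for all k ∈ ℤ. -/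
noncomputable section

open Filter Topology

section Helpers

variable {d : ℕ} (A : ℤ → (Ed d ≃L[ℝ] Ed d))

lemma phiNat_succ (l : ℤ) (n : ℕ) (x : Ed d) :
    PhiNat A l (n + 1) x = A (l + n) (PhiNat A l n x) := rfl

lemma phiNat_succ_front (l : ℤ) (n : ℕ) (x : Ed d) :
    PhiNat A l (n + 1) x = PhiNat A (l + 1) n (A l x) := by
  induction n generalizing l x with
  | zero => simp [PhiNat, ContinuousLinearEquiv.trans_apply]
  | succ n ih =>
      rw [phiNat_succ A l (n+1) x, ih, phiNat_succ]
      congr 2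
      push_cast; ring

lemma phi_self (k : ℤ) : Phi A k k = ContinuousLinearEquiv.refl ℝ (Ed d) := by
  simp [Phi, PhiNat]

lemma phi_succ (k l : ℤ) (x : Ed d) : Phi A (k + 1) l x = A k (Phi A k l x) := by
  rcases le_or_gt l k with h | h
  · have h1 : (k + 1 - l).toNat = (k - l).toNat + 1 := by omega
    have h2 : l + ((k - l).toNat : ℤ) = k := by omega
    rw [Phi, Phi, if_pos (by omega), if_pos h, h1, phiNat_succ, h2]
  · rcases eq_or_lt_of_le (show k + 1 ≤ l by omega) with h' | h'
    · subst h'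
      rw [Phi, Phi, if_pos (by omega), if_neg (by omega)]
      have h1 : (k + 1 - k).toNat = 1 := by omega
      have h2 : (k + 1 - (k + 1)).toNat = 0 := by omega
      rw [h1, h2]
      have h3 : ∀ y : Ed d, PhiNat A k 1 y = A k y := by
        intro y; rw [phiNat_succ]; simp [PhiNat]
      have := h3 ((PhiNat A k 1).symm x)
      rw [(PhiNat A k 1).apply_symm_apply] at this
      calc (PhiNat A (k+1) 0) x = x := rfl
        _ = A k ((PhiNat A k 1).symm x) := this
    · rw [Phi, Phi, if_neg (by omega), if_neg (by omega)]
      set n := (l - (k+1)).toNat with hn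
      have h1 : (l - k).toNat = n + 1 := by omega
      rw [h1]
      have key : ∀ y : Ed d, PhiNat A k (n+1) y = PhiNat A (k+1) n (A k y) :=
        fun y => phiNat_succ_front A k n y
      have := key ((PhiNat A k (n+1)).symm x)
      rw [(PhiNat A k (n+1)).apply_symm_apply] at this
      rw [ContinuousLinearEquiv.symm_apply_eq]
      exact this

lemma phi_inv (l k : ℤ) (h : l ≤ k) : Phi A l k = (Phi A k l).symm := by
  rcases eq_or_lt_of_le h with h' | h'
  · subst h'; simp [phi_self]
  · rw [Phi, Phi, if_neg (by omega), if_pos h]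

end Helpers

section Weights

lemma wt_pos (ω : ℝ) (k : ℤ) : 0 < wt ω k := by
  unfold wt; positivity

lemma one_le_wt {ω : ℝ} (hω : 0 ≤ ω) (k : ℤ) : 1 ≤ wt ω k := by
  unfold wt
  exact Real.one_le_rpow (by linarith [abs_nonneg ((k:ℝ))]) hω

lemma wt_ratio {ω : ℝ} (hω : 0 ≤ ω) (k l : ℤ) :
    wt ω k ≤ wt ω l * (|(k : ℝ) - l| + 1) ^ ω := by
  have h1 : |(k : ℝ)| - |(l : ℝ)| ≤ |(k : ℝ) - l| := abs_sub_abs_le_abs_sub _ _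
  have h2 : (0:ℝ) ≤ |(l : ℝ)| := abs_nonneg _
  have h3 : (0:ℝ) ≤ |(k : ℝ) - l| := abs_nonneg _
  have base : |(k : ℝ)| + 1 ≤ (|(l : ℝ)| + 1) * (|(k : ℝ) - l| + 1) := by nlinarith
  have := Real.rpow_le_rpow (by positivity) base hω
  rw [Real.mul_rpow (by positivity) (by positivity)] at this
  exact this

lemma wt_ratio_sub {ω : ℝ} (hω : 0 ≤ ω) (k : ℤ) (n : ℕ) :
    wt ω k ≤ wt ω (k - n) * ((n : ℝ) + 1) ^ ω := by
  have := wt_ratio hω k (k - n)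
  have h : |(k : ℝ) - ((k : ℤ) - (n:ℤ) : ℤ)| = (n : ℝ) := by
    push_cast; simp [abs_of_nonneg]
  rw [h] at this
  exact this

lemma wt_ratio_add {ω : ℝ} (hω : 0 ≤ ω) (k : ℤ) (n : ℕ) :
    wt ω k ≤ wt ω (k + n) * ((n : ℝ) + 1) ^ ω := by
  have := wt_ratio hω k (k + n)
  have h : |(k : ℝ) - ((k : ℤ) + (n:ℤ) : ℤ)| = (n : ℝ) := by
    push_cast; rw [show (k:ℝ) - (k + n) = -n by ring]; simp
  rw [h] at this
  exact this

/-- The master geometric-polynomial series. -/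
lemma summable_wt_geom {ω lam : ℝ} (hω : 0 ≤ ω) (h0 : 0 < lam) (h1 : lam < 1) :
    Summable (fun n : ℕ => ((n : ℝ) + 1) ^ ω * lam ^ n) := by
  obtain ⟨m, hm⟩ : ∃ m : ℕ, ω ≤ m := ⟨⌈ω⌉₊, Nat.le_ceil ω⟩
  have hb : Summable (fun n : ℕ => ((n : ℝ)) ^ m * lam ^ n) := by
    apply summable_pow_mul_geometric_of_norm_lt_one
    rw [Real.norm_eq_abs, abs_of_pos h0]; exact h1
  have hb1 : Summable (fun n : ℕ => ((n : ℝ) + 1) ^ m * lam ^ n) := by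
    have hs : Summable (fun n : ℕ => ((n + 1 : ℕ) : ℝ) ^ m * lam ^ (n + 1)) :=
      (summable_nat_add_iff 1).mpr hb
    have hs2 := hs.mul_right lam⁻¹
    apply hs2.congr
    intro n
    have hln : lam ≠ 0 := ne_of_gt h0
    push_cast
    rw [pow_succ]
    field_simp
  apply Summable.of_nonneg_of_le (fun n => by positivity) _ hb1
  intro n
  have h2 : ((n : ℝ) + 1) ^ ω ≤ ((n : ℝ) + 1) ^ (m : ℝ) :=
    Real.rpow_le_rpow_of_exponent_le
      (by have := Nat.cast_nonneg (α := ℝ) n; linarith) hm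
  rw [Real.rpow_natCast] at h2
  exact mul_le_mul_of_nonneg_right h2 (by positivity)

end Weights

section HalfLine

variable {d : ℕ} {A : ℤ → (Ed d ≃L[ℝ] Ed d)} {K lam : ℝ} {P Q : ℤ → (Ed d →L[ℝ] Ed d)}

lemma toNat_tendsto_atTop : Tendsto Int.toNat atTop atTop :=
  Filter.tendsto_atTop_atTop.2 (fun b => ⟨(b : ℤ), fun a ha => by omega⟩)

lemma neg_toNat_tendsto_atBot : Tendsto (fun k : ℤ => (0 - k).toNat) atBot atTop :=
  Filter.tendsto_atTop.2 fun b =>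
    (Filter.eventually_le_atBot (-(b : ℤ))).mono (fun k hk => by omega)

lemma phi_mem_range_pos (h : HyperbolicOnWith A {k : ℤ | 0 ≤ k} K lam P Q) :
    ∀ k : ℤ, 0 ≤ k → ∀ u : Ed d, u ∈ LinearMap.range (Q 0 : Ed d →ₗ[ℝ] Ed d) →
      Phi A k 0 u ∈ LinearMap.range (Q k : Ed d →ₗ[ℝ] Ed d) := by
  obtain ⟨-, -, -, -, -, -, hinv, -, -, -⟩ := id h
  intro k hk
  refine Int.le_induction (motive := fun k _ => ∀ u : Ed d, u ∈ LinearMap.range (Q 0 : Ed d →ₗ[ℝ] Ed d) →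
      Phi A k 0 u ∈ LinearMap.range (Q k : Ed d →ₗ[ℝ] Ed d)) ?_ ?_ k hk
  · intro u hu
    rw [phi_self]
    exact hu
  · intro k hk ih u hu
    rw [phi_succ]
    have h2 := (hinv k (show k ∈ {k : ℤ | 0 ≤ k} from hk)
      (show k + 1 ∈ {k : ℤ | 0 ≤ k} by exact (by omega : (0:ℤ) ≤ k + 1))).2
    have h3 : A k (Phi A k 0 u) ∈ (A k) '' (LinearMap.range (Q k : Ed d →ₗ[ℝ] Ed d) : Set (Ed d)) :=
      Set.mem_image_of_mem _ (ih u hu)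
    rw [h2] at h3
    exact h3

lemma phi_mem_range_neg (h : HyperbolicOnWith A {k : ℤ | k ≤ 0} K lam P Q) :
    ∀ k : ℤ, k ≤ 0 → ∀ u : Ed d, u ∈ LinearMap.range (P 0 : Ed d →ₗ[ℝ] Ed d) →
      Phi A k 0 u ∈ LinearMap.range (P k : Ed d →ₗ[ℝ] Ed d) := by
  obtain ⟨-, -, -, -, -, -, hinv, -, -, -⟩ := id h
  intro k hk
  refine Int.le_induction_down (motive := fun k _ => ∀ u : Ed d, u ∈ LinearMap.range (P 0 : Ed d →ₗ[ℝ] Ed d) →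
      Phi A k 0 u ∈ LinearMap.range (P k : Ed d →ₗ[ℝ] Ed d)) ?_ ?_ k hk
  · intro u hu
    rw [phi_self]
    exact hu
  · intro k hk ih u hu
    have h2 := (hinv (k - 1) (show k - 1 ∈ {k : ℤ | k ≤ 0} by exact (by omega : k - 1 ≤ 0))
      (show k - 1 + 1 ∈ {k : ℤ | k ≤ 0} by exact (by omega : k - 1 + 1 ≤ 0))).1
    have e : k - 1 + 1 = k := by omega
    rw [e] at h2
    have h3 : Phi A k 0 u ∈ (A (k - 1)) '' (LinearMap.range (P (k - 1) : Ed d →ₗ[ℝ] Ed d) : Set (Ed d)) := by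
      rw [h2]
      exact ih u hu
    obtain ⟨y, hy, hay⟩ := h3
    have h4 : Phi A k 0 u = A (k - 1) (Phi A (k - 1) 0 u) := by
      conv_lhs => rw [← e]
      rw [phi_succ]
    have h5 : y = Phi A (k - 1) 0 u := by
      apply (A (k - 1)).injective
      rw [hay, ← h4]
    rw [← h5]
    exact hy

lemma bplus_Q_eq_zero (h : HyperbolicOnWith A {k : ℤ | 0 ≤ k} K lam P Q)
    {v : Ed d} (hv : v ∈ Bplus A) : Q 0 v = 0 := by
  obtain ⟨hK, hlam0, hlam1, hPQ, hidem, -, -, hP, hQ, hnorm⟩ := id h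
  have hmem0 : (0:ℤ) ∈ {k : ℤ | 0 ≤ k} := Set.mem_setOf.mpr (le_refl 0)
  have hur : Q 0 v ∈ LinearMap.range (Q 0 : Ed d →ₗ[ℝ] Ed d) := ⟨v, rfl⟩
  have hsplit : Q 0 v = v - P 0 v := by
    have := congrArg (fun (T : Ed d →L[ℝ] Ed d) => T v) (hPQ 0 hmem0)
    simp only [ContinuousLinearMap.add_apply, ContinuousLinearMap.one_apply] at this
    linear_combination (norm := module) this
  have key : ∀ k : ℤ, 0 ≤ k →
      ‖Q 0 v‖ ≤ K * (‖Phi A k 0 v‖ + K * lam ^ k.toNat * ‖P 0 v‖) := by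
    intro k hk
    have hmemk : k ∈ {k : ℤ | 0 ≤ k} := hk
    have h1 : ‖Phi A 0 k (Phi A k 0 (Q 0 v))‖ ≤
        K * lam ^ ((k - 0).toNat) * ‖Phi A k 0 (Q 0 v)‖ :=
      hQ k hmemk 0 hmem0 hk _ (phi_mem_range_pos h k hk _ hur)
    rw [phi_inv A 0 k hk] at h1
    rw [(Phi A k 0).symm_apply_apply] at h1
    have e0 : (k - 0).toNat = k.toNat := by omega
    rw [e0] at h1
    have h2 : ‖Phi A k 0 (Q 0 v)‖ ≤ ‖Phi A k 0 v‖ + ‖Phi A k 0 (P 0 v)‖ := by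
      rw [hsplit, map_sub]
      exact norm_sub_le _ _
    have h3 : ‖Phi A k 0 (P 0 v)‖ ≤ K * lam ^ ((k - 0).toNat) * ‖P 0 v‖ :=
      hP 0 hmem0 k hmemk hk _ ⟨v, rfl⟩
    rw [e0] at h3
    have hl1 : lam ^ k.toNat ≤ 1 := pow_le_one₀ hlam0.le hlam1.le
    have hl0 : (0:ℝ) ≤ lam ^ k.toNat := by positivity
    have hn1 : (0:ℝ) ≤ ‖Phi A k 0 v‖ := norm_nonneg _
    have hn2 : (0:ℝ) ≤ ‖P 0 v‖ := norm_nonneg _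
    calc ‖Q 0 v‖ ≤ K * lam ^ k.toNat * ‖Phi A k 0 (Q 0 v)‖ := h1
      _ ≤ K * lam ^ k.toNat * (‖Phi A k 0 v‖ + K * lam ^ k.toNat * ‖P 0 v‖) := by
          apply mul_le_mul_of_nonneg_left _ (by positivity)
          exact h2.trans (by linarith)
      _ ≤ K * (‖Phi A k 0 v‖ + K * lam ^ k.toNat * ‖P 0 v‖) := by
          have hb : (0:ℝ) ≤ ‖Phi A k 0 v‖ + K * lam ^ k.toNat * ‖P 0 v‖ := by positivity
          exact mul_le_mul_of_nonneg_right (mul_le_of_le_one_right hK.le hl1) hb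
  have t2 : Tendsto (fun k : ℤ => lam ^ k.toNat) atTop (𝓝 0) :=
    (tendsto_pow_atTop_nhds_zero_of_lt_one hlam0.le hlam1).comp toNat_tendsto_atTop
  have t1 : Tendsto (fun k : ℤ => K * (‖Phi A k 0 v‖ + K * lam ^ k.toNat * ‖P 0 v‖))
      atTop (𝓝 0) := by
    have := ((hv.add (((t2.const_mul K).mul_const (‖P 0 v‖)))).const_mul K)
    simpa using this
  have hle : ‖Q 0 v‖ ≤ 0 :=
    ge_of_tendsto t1 ((Filter.eventually_ge_atTop 0).mono key)
  simpa using norm_le_zero_iff.mp hle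

lemma bminus_P_eq_zero (h : HyperbolicOnWith A {k : ℤ | k ≤ 0} K lam P Q)
    {w : Ed d} (hw : w ∈ Bminus A) : P 0 w = 0 := by
  obtain ⟨hK, hlam0, hlam1, hPQ, hidem, -, -, hP, hQ, hnorm⟩ := id h
  have hmem0 : (0:ℤ) ∈ {k : ℤ | k ≤ 0} := Set.mem_setOf.mpr (le_refl 0)
  have hur : P 0 w ∈ LinearMap.range (P 0 : Ed d →ₗ[ℝ] Ed d) := ⟨w, rfl⟩
  have hsplit : P 0 w = w - Q 0 w := by
    have := congrArg (fun (T : Ed d →L[ℝ] Ed d) => T w) (hPQ 0 hmem0)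
    simp only [ContinuousLinearMap.add_apply, ContinuousLinearMap.one_apply] at this
    linear_combination (norm := module) this
  have key : ∀ k : ℤ, k ≤ 0 →
      ‖P 0 w‖ ≤ K * (‖Phi A k 0 w‖ + K * lam ^ (0 - k).toNat * ‖Q 0 w‖) := by
    intro k hk
    have hmemk : k ∈ {k : ℤ | k ≤ 0} := hk
    have h1 : ‖Phi A 0 k (Phi A k 0 (P 0 w))‖ ≤
        K * lam ^ ((0 - k).toNat) * ‖Phi A k 0 (P 0 w)‖ :=
      hP k hmemk 0 hmem0 hk _ (phi_mem_range_neg h k hk _ hur)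
    have hinvk : Phi A 0 k (Phi A k 0 (P 0 w)) = P 0 w := by
      have e := phi_inv A k 0 hk
      have : Phi A 0 k ((Phi A 0 k).symm (P 0 w)) = Phi A 0 k (Phi A k 0 (P 0 w)) := by
        rw [e]
      rw [← this, (Phi A 0 k).apply_symm_apply]
    rw [hinvk] at h1
    have h2 : ‖Phi A k 0 (P 0 w)‖ ≤ ‖Phi A k 0 w‖ + ‖Phi A k 0 (Q 0 w)‖ := by
      rw [hsplit, map_sub]
      exact norm_sub_le _ _
    have h3 : ‖Phi A k 0 (Q 0 w)‖ ≤ K * lam ^ ((0 - k).toNat) * ‖Q 0 w‖ :=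
      hQ 0 hmem0 k hmemk hk _ ⟨w, rfl⟩
    have hl1 : lam ^ (0 - k).toNat ≤ 1 := pow_le_one₀ hlam0.le hlam1.le
    have hl0 : (0:ℝ) ≤ lam ^ (0 - k).toNat := by positivity
    have hn1 : (0:ℝ) ≤ ‖Phi A k 0 w‖ := norm_nonneg _
    have hn2 : (0:ℝ) ≤ ‖Q 0 w‖ := norm_nonneg _
    calc ‖P 0 w‖ ≤ K * lam ^ (0 - k).toNat * ‖Phi A k 0 (P 0 w)‖ := h1
      _ ≤ K * lam ^ (0 - k).toNat * (‖Phi A k 0 w‖ + K * lam ^ (0 - k).toNat * ‖Q 0 w‖) := by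
          apply mul_le_mul_of_nonneg_left _ (by positivity)
          exact h2.trans (by linarith)
      _ ≤ K * (‖Phi A k 0 w‖ + K * lam ^ (0 - k).toNat * ‖Q 0 w‖) := by
          have hb : (0:ℝ) ≤ ‖Phi A k 0 w‖ + K * lam ^ (0 - k).toNat * ‖Q 0 w‖ := by positivity
          exact mul_le_mul_of_nonneg_right (mul_le_of_le_one_right hK.le hl1) hb
  have t2 : Tendsto (fun k : ℤ => lam ^ (0 - k).toNat) atBot (𝓝 0) :=
    (tendsto_pow_atTop_nhds_zero_of_lt_one hlam0.le hlam1).comp neg_toNat_tendsto_atBot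
  have t1 : Tendsto (fun k : ℤ => K * (‖Phi A k 0 w‖ + K * lam ^ (0 - k).toNat * ‖Q 0 w‖))
      atBot (𝓝 0) := by
    have := ((hw.add (((t2.const_mul K).mul_const (‖Q 0 w‖)))).const_mul K)
    simpa using this
  have hle : ‖P 0 w‖ ≤ 0 :=
    ge_of_tendsto t1 ((Filter.eventually_le_atBot 0).mono key)
  simpa using norm_le_zero_iff.mp hle

end HalfLine

section Construction

variable {d : ℕ} (A : ℤ → (Ed d ≃L[ℝ] Ed d)) (P Q : ℤ → (Ed d →L[ℝ] Ed d)) (f : ℤ → Ed d)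

/-- Stable-part summand. -/
def upT (k : ℤ) (n : ℕ) : Ed d := Phi A k (k - n) ((P (k - n)) (f (k - n)))

/-- Unstable-part summand. -/
def uqT (k : ℤ) (n : ℕ) : Ed d := Phi A k (k + 1 + n) ((Q (k + 1 + n)) (f (k + 1 + n)))

lemma upT_succ (k : ℤ) (n : ℕ) : upT A P f (k + 1) (n + 1) = A k (upT A P f k n) := by
  unfold upT
  have e : (k + 1) - ((n + 1 : ℕ) : ℤ) = k - n := by push_cast; ring
  rw [e, phi_succ]

lemma upT_zero (k : ℤ) : upT A P f (k + 1) 0 = P (k + 1) (f (k + 1)) := by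
  unfold upT
  have e : (k + 1) - ((0 : ℕ) : ℤ) = k + 1 := by push_cast; ring
  rw [e, phi_self]
  simp

lemma uqT_succ (k : ℤ) (n : ℕ) : A k (uqT A Q f k (n + 1)) = uqT A Q f (k + 1) n := by
  unfold uqT
  have e : k + 1 + ((n + 1 : ℕ) : ℤ) = (k + 1) + 1 + n := by push_cast; ring
  rw [e, ← phi_succ]

lemma uqT_zero (k : ℤ) : A k (uqT A Q f k 0) = Q (k + 1) (f (k + 1)) := by
  unfold uqT
  have e : k + 1 + ((0 : ℕ) : ℤ) = k + 1 := by push_cast; ring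
  rw [e, ← phi_succ, phi_self]
  simp

end Construction

section PosHalf

variable {d : ℕ} {A : ℤ → (Ed d ≃L[ℝ] Ed d)} {K lam ω : ℝ} {P Q : ℤ → (Ed d →L[ℝ] Ed d)}

lemma pos_half (hω : 0 ≤ ω) (h : HyperbolicOnWith A {k : ℤ | 0 ≤ k} K lam P Q)
    (f : ℤ → Ed d) (Cf : ℝ) (hf : ∀ k, ‖f k‖ * wt ω k ≤ Cf) :
    ∃ (x : ℤ → Ed d) (C : ℝ), (∀ k : ℤ, 0 ≤ k → ‖x k‖ * wt ω k ≤ C) ∧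
      (∀ k : ℤ, 0 ≤ k → x (k + 1) = A k (x k) + f (k + 1)) := by
  obtain ⟨hK, hl0, hl1, hPQ, hidem, hcompl, hinv, hP, hQ, hnorm⟩ := id h
  have hCf : 0 ≤ Cf := le_trans (mul_nonneg (norm_nonneg _) (wt_pos ω 0).le) (hf 0)
  have hfb : ∀ k, ‖f k‖ ≤ Cf := fun k =>
    le_trans (le_mul_of_one_le_right (norm_nonneg _) (one_le_wt hω k)) (hf k)
  set g : ℕ → ℝ := fun n => ((n : ℝ) + 1) ^ ω * lam ^ n with hgdef
  have hg : Summable g := summable_wt_geom hω hl0 hl1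
  set S := ∑' n : ℕ, g n with hSdef
  have hgnn : ∀ n : ℕ, 0 ≤ g n := fun n => by simp only [hgdef]; positivity
  have hS0 : 0 ≤ S := tsum_nonneg hgnn
  -- raw estimates
  have hPest : ∀ k : ℤ, 0 ≤ k → ∀ n : ℕ, (n : ℤ) ≤ k →
      ‖upT A P f k n‖ ≤ K * lam ^ n * (K * ‖f (k - n)‖) := by
    intro k hk n hn
    have hl : k - n ∈ {k : ℤ | 0 ≤ k} := Set.mem_setOf.mpr (by omega)
    have h1 := hP (k - n) hl k (Set.mem_setOf.mpr hk) (by omega) (P (k - n) (f (k - n)))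
      ⟨f (k - n), rfl⟩
    have e : (k - (k - n)).toNat = n := by omega
    rw [e] at h1
    have h2 : ‖P (k - n) (f (k - n))‖ ≤ K * ‖f (k - n)‖ :=
      le_trans ((P (k - n)).le_opNorm _)
        (mul_le_mul_of_nonneg_right (hnorm _ hl).1 (norm_nonneg _))
    calc ‖upT A P f k n‖ = ‖Phi A k (k - n) (P (k - n) (f (k - n)))‖ := rfl
      _ ≤ K * lam ^ n * ‖P (k - n) (f (k - n))‖ := h1
      _ ≤ K * lam ^ n * (K * ‖f (k - n)‖) :=
          mul_le_mul_of_nonneg_left h2 (by positivity)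
  have hQest : ∀ k : ℤ, 0 ≤ k → ∀ n : ℕ,
      ‖uqT A Q f k n‖ ≤ K * lam ^ (n + 1) * (K * ‖f (k + 1 + n)‖) := by
    intro k hk n
    have hl : k + 1 + n ∈ {k : ℤ | 0 ≤ k} := Set.mem_setOf.mpr (by omega)
    have h1 := hQ (k + 1 + n) hl k (Set.mem_setOf.mpr hk) (by omega)
      (Q (k + 1 + n) (f (k + 1 + n))) ⟨f (k + 1 + n), rfl⟩
    have e : (k + 1 + n - k).toNat = n + 1 := by omega
    rw [e] at h1
    have h2 : ‖Q (k + 1 + n) (f (k + 1 + n))‖ ≤ K * ‖f (k + 1 + n)‖ :=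
      le_trans ((Q (k + 1 + n)).le_opNorm _)
        (mul_le_mul_of_nonneg_right (hnorm _ hl).2 (norm_nonneg _))
    calc ‖uqT A Q f k n‖ = ‖Phi A k (k + 1 + n) (Q (k + 1 + n) (f (k + 1 + n)))‖ := rfl
      _ ≤ K * lam ^ (n + 1) * ‖Q (k + 1 + n) (f (k + 1 + n))‖ := h1
      _ ≤ K * lam ^ (n + 1) * (K * ‖f (k + 1 + n)‖) :=
          mul_le_mul_of_nonneg_left h2 (by positivity)
  -- weighted estimates
  have hPwt : ∀ k : ℤ, 0 ≤ k → ∀ n : ℕ, (n : ℤ) ≤ k →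
      ‖upT A P f k n‖ * wt ω k ≤ K * K * Cf * g n := by
    intro k hk n hn
    calc ‖upT A P f k n‖ * wt ω k
        ≤ (K * lam ^ n * (K * ‖f (k - n)‖)) * (wt ω (k - n) * ((n : ℝ) + 1) ^ ω) :=
          mul_le_mul (hPest k hk n hn) (wt_ratio_sub hω k n) (wt_pos ω k).le (by positivity)
      _ = (K * K * (((n : ℝ) + 1) ^ ω * lam ^ n)) * (‖f (k - n)‖ * wt ω (k - n)) := by ring
      _ ≤ (K * K * (((n : ℝ) + 1) ^ ω * lam ^ n)) * Cf :=
          mul_le_mul_of_nonneg_left (hf _) (by positivity)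
      _ = K * K * Cf * g n := by rw [hgdef]; ring
  have hQwt : ∀ k : ℤ, 0 ≤ k → ∀ n : ℕ,
      ‖uqT A Q f k n‖ * wt ω k ≤ K * K * Cf * g (n + 1) := by
    intro k hk n
    have hr : wt ω k ≤ wt ω (k + 1 + n) * (((n : ℝ) + 1) + 1) ^ ω := by
      have := wt_ratio_add hω k (n + 1)
      have e : k + ((n + 1 : ℕ) : ℤ) = k + 1 + n := by push_cast; ring
      rw [e] at this
      have e2 : (((n + 1 : ℕ) : ℝ)) + 1 = ((n : ℝ) + 1) + 1 := by push_cast; ring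
      rw [e2] at this
      exact this
    calc ‖uqT A Q f k n‖ * wt ω k
        ≤ (K * lam ^ (n + 1) * (K * ‖f (k + 1 + n)‖)) *
            (wt ω (k + 1 + n) * (((n : ℝ) + 1) + 1) ^ ω) :=
          mul_le_mul (hQest k hk n) hr (wt_pos ω k).le (by positivity)
      _ = (K * K * ((((n : ℝ) + 1) + 1) ^ ω * lam ^ (n + 1))) *
            (‖f (k + 1 + n)‖ * wt ω (k + 1 + n)) := by ring
      _ ≤ (K * K * ((((n : ℝ) + 1) + 1) ^ ω * lam ^ (n + 1))) * Cf :=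
          mul_le_mul_of_nonneg_left (hf _) (by positivity)
      _ = K * K * Cf * g (n + 1) := by
          rw [hgdef]
          push_cast
          ring
  -- summability of the unstable series
  have hqnorm : ∀ k : ℤ, 0 ≤ k → Summable (fun n : ℕ => ‖uqT A Q f k n‖) := by
    intro k hk
    have hgeom : Summable (fun n : ℕ => (K * K * Cf * lam) * lam ^ n) :=
      (summable_geometric_of_lt_one hl0.le hl1).mul_left _
    refine Summable.of_nonneg_of_le (fun n => norm_nonneg _) (fun n => ?_) hgeom
    calc ‖uqT A Q f k n‖ ≤ K * lam ^ (n + 1) * (K * ‖f (k + 1 + n)‖) := hQest k hk n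
        _ ≤ K * lam ^ (n + 1) * (K * Cf) := by
            apply mul_le_mul_of_nonneg_left _ (by positivity)
            exact mul_le_mul_of_nonneg_left (hfb _) hK.le
        _ = (K * K * Cf * lam) * lam ^ n := by ring
  have hqsum : ∀ k : ℤ, 0 ≤ k → Summable (fun n : ℕ => uqT A Q f k n) :=
    fun k hk => (hqnorm k hk).of_norm
  -- the candidate solution
  refine ⟨fun k => (∑ n ∈ Finset.range k.toNat, upT A P f k n) - ∑' n : ℕ, uqT A Q f k n,
    K * K * Cf * S + K * K * Cf * S, ?_, ?_⟩
  · intro k hk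
    have b1 : ‖∑ n ∈ Finset.range k.toNat, upT A P f k n‖ * wt ω k ≤ K * K * Cf * S := by
      calc ‖∑ n ∈ Finset.range k.toNat, upT A P f k n‖ * wt ω k
          ≤ (∑ n ∈ Finset.range k.toNat, ‖upT A P f k n‖) * wt ω k :=
            mul_le_mul_of_nonneg_right (norm_sum_le _ _) (wt_pos ω k).le
        _ = ∑ n ∈ Finset.range k.toNat, ‖upT A P f k n‖ * wt ω k := by
            rw [Finset.sum_mul]
        _ ≤ ∑ n ∈ Finset.range k.toNat, K * K * Cf * g n :=
            Finset.sum_le_sum (fun n hn => hPwt k hk n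
              (by have := Finset.mem_range.mp hn; omega))
        _ = K * K * Cf * ∑ n ∈ Finset.range k.toNat, g n := by rw [Finset.mul_sum]
        _ ≤ K * K * Cf * S :=
            mul_le_mul_of_nonneg_left (Summable.sum_le_tsum _ (fun n _ => hgnn n) hg) (by positivity)
    have hshift : ∑' n : ℕ, g (n + 1) ≤ S := by
      have h1 := Summable.tsum_eq_zero_add hg
      have h2 : 0 ≤ g 0 := hgnn 0
      rw [← hSdef] at h1
      linarith
    have b2 : ‖∑' n : ℕ, uqT A Q f k n‖ * wt ω k ≤ K * K * Cf * S := by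
      calc ‖∑' n : ℕ, uqT A Q f k n‖ * wt ω k
          ≤ (∑' n : ℕ, ‖uqT A Q f k n‖) * wt ω k :=
            mul_le_mul_of_nonneg_right (norm_tsum_le_tsum_norm (hqnorm k hk)) (wt_pos ω k).le
        _ = ∑' n : ℕ, ‖uqT A Q f k n‖ * wt ω k := by rw [← tsum_mul_right]
        _ ≤ ∑' n : ℕ, K * K * Cf * g (n + 1) := by
            apply Summable.tsum_le_tsum (fun n => hQwt k hk n)
            · exact (hqnorm k hk).mul_right _
            · exact (((summable_nat_add_iff 1).mpr hg).mul_left _)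
        _ = K * K * Cf * ∑' n : ℕ, g (n + 1) := by rw [tsum_mul_left]
        _ ≤ K * K * Cf * S := mul_le_mul_of_nonneg_left hshift (by positivity)
    calc ‖(∑ n ∈ Finset.range k.toNat, upT A P f k n) - ∑' n : ℕ, uqT A Q f k n‖ * wt ω k
        ≤ (‖∑ n ∈ Finset.range k.toNat, upT A P f k n‖ + ‖∑' n : ℕ, uqT A Q f k n‖) *
            wt ω k := mul_le_mul_of_nonneg_right (norm_sub_le _ _) (wt_pos ω k).le
      _ = ‖∑ n ∈ Finset.range k.toNat, upT A P f k n‖ * wt ω k +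
            ‖∑' n : ℕ, uqT A Q f k n‖ * wt ω k := by ring
      _ ≤ K * K * Cf * S + K * K * Cf * S := add_le_add b1 b2
  · intro k hk
    have hkt : (k + 1).toNat = k.toNat + 1 := by omega
    have hPQ1 : P (k + 1) (f (k + 1)) + Q (k + 1) (f (k + 1)) = f (k + 1) := by
      have h1 := congrArg (fun (T : Ed d →L[ℝ] Ed d) => T (f (k + 1)))
        (hPQ (k + 1) (Set.mem_setOf.mpr (by omega)))
      simpa using h1
    have hstab : ∑ n ∈ Finset.range (k + 1).toNat, upT A P f (k + 1) n
        = A k (∑ n ∈ Finset.range k.toNat, upT A P f k n) + P (k + 1) (f (k + 1)) := by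
      rw [hkt, Finset.sum_range_succ', upT_zero]
      congr 1
      rw [map_sum]
      exact Finset.sum_congr rfl (fun n _ => upT_succ A P f k n)
    have hsk : Summable (fun n : ℕ => uqT A Q f k n) := hqsum k hk
    have hsk2 : Summable (fun n : ℕ => A k (uqT A Q f k n)) :=
      hsk.map (A k : Ed d →L[ℝ] Ed d) (A k : Ed d →L[ℝ] Ed d).continuous
    have hmapped : A k (∑' n : ℕ, uqT A Q f k n) = ∑' n : ℕ, A k (uqT A Q f k n) :=
      ContinuousLinearMap.map_tsum (A k : Ed d →L[ℝ] Ed d) hsk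
    have huq : ∑' n : ℕ, uqT A Q f (k + 1) n
        = A k (∑' n : ℕ, uqT A Q f k n) - Q (k + 1) (f (k + 1)) := by
      have hz := Summable.tsum_eq_zero_add hsk2
      calc ∑' n : ℕ, uqT A Q f (k + 1) n = ∑' n : ℕ, A k (uqT A Q f k (n + 1)) :=
            tsum_congr (fun n => (uqT_succ A Q f k n).symm)
        _ = (∑' n : ℕ, A k (uqT A Q f k n)) - A k (uqT A Q f k 0) := by
            rw [hz]; abel
        _ = A k (∑' n : ℕ, uqT A Q f k n) - Q (k + 1) (f (k + 1)) := by
            rw [hmapped, uqT_zero]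
    show (∑ n ∈ Finset.range (k + 1).toNat, upT A P f (k + 1) n) -
        ∑' n : ℕ, uqT A Q f (k + 1) n
        = A k ((∑ n ∈ Finset.range k.toNat, upT A P f k n) - ∑' n : ℕ, uqT A Q f k n)
          + f (k + 1)
    rw [hstab, huq, map_sub]
    have habel : ∀ a b p q fv : Ed d, p + q = fv → (a + p) - (b - q) = (a - b) + fv := by
      intro a b p q fv hpq
      rw [← hpq]; abel
    exact habel _ _ _ _ _ hPQ1

end PosHalf

section NegHalf

variable {d : ℕ} {A : ℤ → (Ed d ≃L[ℝ] Ed d)} {K lam ω : ℝ} {P Q : ℤ → (Ed d →L[ℝ] Ed d)}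

lemma neg_half (hω : 0 ≤ ω) (h : HyperbolicOnWith A {k : ℤ | k ≤ 0} K lam P Q)
    (f : ℤ → Ed d) (Cf : ℝ) (hf : ∀ k, ‖f k‖ * wt ω k ≤ Cf) :
    ∃ (x : ℤ → Ed d) (C : ℝ), (∀ k : ℤ, k ≤ 0 → ‖x k‖ * wt ω k ≤ C) ∧
      (∀ k : ℤ, k + 1 ≤ 0 → x (k + 1) = A k (x k) + f (k + 1)) := by
  obtain ⟨hK, hl0, hl1, hPQ, hidem, hcompl, hinv, hP, hQ, hnorm⟩ := id h
  have hCf : 0 ≤ Cf := le_trans (mul_nonneg (norm_nonneg _) (wt_pos ω 0).le) (hf 0)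
  have hfb : ∀ k, ‖f k‖ ≤ Cf := fun k =>
    le_trans (le_mul_of_one_le_right (norm_nonneg _) (one_le_wt hω k)) (hf k)
  set g : ℕ → ℝ := fun n => ((n : ℝ) + 1) ^ ω * lam ^ n with hgdef
  have hg : Summable g := summable_wt_geom hω hl0 hl1
  set S := ∑' n : ℕ, g n with hSdef
  have hgnn : ∀ n : ℕ, 0 ≤ g n := fun n => by simp only [hgdef]; positivity
  have hS0 : 0 ≤ S := tsum_nonneg hgnn
  -- raw estimates
  have hPest : ∀ k : ℤ, k ≤ 0 → ∀ n : ℕ,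
      ‖upT A P f k n‖ ≤ K * lam ^ n * (K * ‖f (k - n)‖) := by
    intro k hk n
    have hl : k - n ∈ {k : ℤ | k ≤ 0} := Set.mem_setOf.mpr (by omega)
    have h1 := hP (k - n) hl k (Set.mem_setOf.mpr hk) (by omega) (P (k - n) (f (k - n)))
      ⟨f (k - n), rfl⟩
    have e : (k - (k - n)).toNat = n := by omega
    rw [e] at h1
    have h2 : ‖P (k - n) (f (k - n))‖ ≤ K * ‖f (k - n)‖ :=
      le_trans ((P (k - n)).le_opNorm _)
        (mul_le_mul_of_nonneg_right (hnorm _ hl).1 (norm_nonneg _))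
    calc ‖upT A P f k n‖ = ‖Phi A k (k - n) (P (k - n) (f (k - n)))‖ := rfl
      _ ≤ K * lam ^ n * ‖P (k - n) (f (k - n))‖ := h1
      _ ≤ K * lam ^ n * (K * ‖f (k - n)‖) :=
          mul_le_mul_of_nonneg_left h2 (by positivity)
  have hQest : ∀ k : ℤ, k ≤ 0 → ∀ n : ℕ, (n : ℤ) < -k →
      ‖uqT A Q f k n‖ ≤ K * lam ^ (n + 1) * (K * ‖f (k + 1 + n)‖) := by
    intro k hk n hn
    have hl : k + 1 + n ∈ {k : ℤ | k ≤ 0} := Set.mem_setOf.mpr (by omega)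
    have h1 := hQ (k + 1 + n) hl k (Set.mem_setOf.mpr hk) (by omega)
      (Q (k + 1 + n) (f (k + 1 + n))) ⟨f (k + 1 + n), rfl⟩
    have e : (k + 1 + n - k).toNat = n + 1 := by omega
    rw [e] at h1
    have h2 : ‖Q (k + 1 + n) (f (k + 1 + n))‖ ≤ K * ‖f (k + 1 + n)‖ :=
      le_trans ((Q (k + 1 + n)).le_opNorm _)
        (mul_le_mul_of_nonneg_right (hnorm _ hl).2 (norm_nonneg _))
    calc ‖uqT A Q f k n‖ = ‖Phi A k (k + 1 + n) (Q (k + 1 + n) (f (k + 1 + n)))‖ := rfl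
      _ ≤ K * lam ^ (n + 1) * ‖Q (k + 1 + n) (f (k + 1 + n))‖ := h1
      _ ≤ K * lam ^ (n + 1) * (K * ‖f (k + 1 + n)‖) :=
          mul_le_mul_of_nonneg_left h2 (by positivity)
  -- weighted estimates
  have hPwt : ∀ k : ℤ, k ≤ 0 → ∀ n : ℕ,
      ‖upT A P f k n‖ * wt ω k ≤ K * K * Cf * g n := by
    intro k hk n
    calc ‖upT A P f k n‖ * wt ω k
        ≤ (K * lam ^ n * (K * ‖f (k - n)‖)) * (wt ω (k - n) * ((n : ℝ) + 1) ^ ω) :=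
          mul_le_mul (hPest k hk n) (wt_ratio_sub hω k n) (wt_pos ω k).le (by positivity)
      _ = (K * K * (((n : ℝ) + 1) ^ ω * lam ^ n)) * (‖f (k - n)‖ * wt ω (k - n)) := by ring
      _ ≤ (K * K * (((n : ℝ) + 1) ^ ω * lam ^ n)) * Cf :=
          mul_le_mul_of_nonneg_left (hf _) (by positivity)
      _ = K * K * Cf * g n := by rw [hgdef]; ring
  have hQwt : ∀ k : ℤ, k ≤ 0 → ∀ n : ℕ, (n : ℤ) < -k →
      ‖uqT A Q f k n‖ * wt ω k ≤ K * K * Cf * g (n + 1) := by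
    intro k hk n hn
    have hr : wt ω k ≤ wt ω (k + 1 + n) * (((n : ℝ) + 1) + 1) ^ ω := by
      have h1 := wt_ratio_add hω k (n + 1)
      have e : k + ((n + 1 : ℕ) : ℤ) = k + 1 + n := by push_cast; ring
      rw [e] at h1
      have e2 : (((n + 1 : ℕ) : ℝ)) + 1 = ((n : ℝ) + 1) + 1 := by push_cast; ring
      rw [e2] at h1
      exact h1
    calc ‖uqT A Q f k n‖ * wt ω k
        ≤ (K * lam ^ (n + 1) * (K * ‖f (k + 1 + n)‖)) *
            (wt ω (k + 1 + n) * (((n : ℝ) + 1) + 1) ^ ω) :=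
          mul_le_mul (hQest k hk n hn) hr (wt_pos ω k).le (by positivity)
      _ = (K * K * ((((n : ℝ) + 1) + 1) ^ ω * lam ^ (n + 1))) *
            (‖f (k + 1 + n)‖ * wt ω (k + 1 + n)) := by ring
      _ ≤ (K * K * ((((n : ℝ) + 1) + 1) ^ ω * lam ^ (n + 1))) * Cf :=
          mul_le_mul_of_nonneg_left (hf _) (by positivity)
      _ = K * K * Cf * g (n + 1) := by
          rw [hgdef]
          push_cast
          ring
  -- summability of the stable series
  have hpnorm : ∀ k : ℤ, k ≤ 0 → Summable (fun n : ℕ => ‖upT A P f k n‖) := by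
    intro k hk
    have hgeom : Summable (fun n : ℕ => (K * K * Cf) * lam ^ n) :=
      (summable_geometric_of_lt_one hl0.le hl1).mul_left _
    refine Summable.of_nonneg_of_le (fun n => norm_nonneg _) (fun n => ?_) hgeom
    calc ‖upT A P f k n‖ ≤ K * lam ^ n * (K * ‖f (k - n)‖) := hPest k hk n
      _ ≤ K * lam ^ n * (K * Cf) := by
          apply mul_le_mul_of_nonneg_left _ (by positivity)
          exact mul_le_mul_of_nonneg_left (hfb _) hK.le
      _ = (K * K * Cf) * lam ^ n := by ring
  have hpsum : ∀ k : ℤ, k ≤ 0 → Summable (fun n : ℕ => upT A P f k n) :=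
    fun k hk => (hpnorm k hk).of_norm
  -- the candidate solution
  refine ⟨fun k => (∑' n : ℕ, upT A P f k n) - ∑ n ∈ Finset.range (-k).toNat, uqT A Q f k n,
    K * K * Cf * S + K * K * Cf * S, ?_, ?_⟩
  · intro k hk
    have hshift : ∑' n : ℕ, g (n + 1) ≤ S := by
      have h1 := Summable.tsum_eq_zero_add hg
      have h2 : 0 ≤ g 0 := hgnn 0
      rw [← hSdef] at h1
      linarith
    have b1 : ‖∑' n : ℕ, upT A P f k n‖ * wt ω k ≤ K * K * Cf * S := by
      calc ‖∑' n : ℕ, upT A P f k n‖ * wt ω k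
          ≤ (∑' n : ℕ, ‖upT A P f k n‖) * wt ω k :=
            mul_le_mul_of_nonneg_right (norm_tsum_le_tsum_norm (hpnorm k hk)) (wt_pos ω k).le
        _ = ∑' n : ℕ, ‖upT A P f k n‖ * wt ω k := by rw [← tsum_mul_right]
        _ ≤ ∑' n : ℕ, K * K * Cf * g n := by
            apply Summable.tsum_le_tsum (fun n => hPwt k hk n)
            · exact (hpnorm k hk).mul_right _
            · exact hg.mul_left _
        _ = K * K * Cf * S := by rw [tsum_mul_left, ← hSdef]
    have b2 : ‖∑ n ∈ Finset.range (-k).toNat, uqT A Q f k n‖ * wt ω k ≤ K * K * Cf * S := by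
      calc ‖∑ n ∈ Finset.range (-k).toNat, uqT A Q f k n‖ * wt ω k
          ≤ (∑ n ∈ Finset.range (-k).toNat, ‖uqT A Q f k n‖) * wt ω k :=
            mul_le_mul_of_nonneg_right (norm_sum_le _ _) (wt_pos ω k).le
        _ = ∑ n ∈ Finset.range (-k).toNat, ‖uqT A Q f k n‖ * wt ω k := by
            rw [Finset.sum_mul]
        _ ≤ ∑ n ∈ Finset.range (-k).toNat, K * K * Cf * g (n + 1) :=
            Finset.sum_le_sum (fun n hn => hQwt k hk n
              (by have := Finset.mem_range.mp hn; omega))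
        _ = K * K * Cf * ∑ n ∈ Finset.range (-k).toNat, g (n + 1) := by rw [Finset.mul_sum]
        _ ≤ K * K * Cf * ∑' n : ℕ, g (n + 1) :=
            mul_le_mul_of_nonneg_left
              (Summable.sum_le_tsum _ (fun n _ => hgnn (n + 1)) ((summable_nat_add_iff 1).mpr hg))
              (by positivity)
        _ ≤ K * K * Cf * S := mul_le_mul_of_nonneg_left hshift (by positivity)
    calc ‖(∑' n : ℕ, upT A P f k n) - ∑ n ∈ Finset.range (-k).toNat, uqT A Q f k n‖ * wt ω k
        ≤ (‖∑' n : ℕ, upT A P f k n‖ + ‖∑ n ∈ Finset.range (-k).toNat, uqT A Q f k n‖) *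
            wt ω k := mul_le_mul_of_nonneg_right (norm_sub_le _ _) (wt_pos ω k).le
      _ = ‖∑' n : ℕ, upT A P f k n‖ * wt ω k +
            ‖∑ n ∈ Finset.range (-k).toNat, uqT A Q f k n‖ * wt ω k := by ring
      _ ≤ K * K * Cf * S + K * K * Cf * S := add_le_add b1 b2
  · intro k hk
    have hk0 : k ≤ 0 := by omega
    have hkt : (-k).toNat = (-(k + 1)).toNat + 1 := by omega
    have hPQ1 : P (k + 1) (f (k + 1)) + Q (k + 1) (f (k + 1)) = f (k + 1) := by
      have h1 := congrArg (fun (T : Ed d →L[ℝ] Ed d) => T (f (k + 1)))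
        (hPQ (k + 1) (Set.mem_setOf.mpr hk))
      simpa using h1
    have hsk : Summable (fun n : ℕ => upT A P f k n) := hpsum k hk0
    have hsk1 : Summable (fun n : ℕ => upT A P f (k + 1) n) := hpsum (k + 1) hk
    have hmapped : A k (∑' n : ℕ, upT A P f k n) = ∑' n : ℕ, A k (upT A P f k n) :=
      ContinuousLinearMap.map_tsum (A k : Ed d →L[ℝ] Ed d) hsk
    have hstab : ∑' n : ℕ, upT A P f (k + 1) n
        = A k (∑' n : ℕ, upT A P f k n) + P (k + 1) (f (k + 1)) := by
      calc ∑' n : ℕ, upT A P f (k + 1) n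
          = upT A P f (k + 1) 0 + ∑' n : ℕ, upT A P f (k + 1) (n + 1) :=
            Summable.tsum_eq_zero_add hsk1
        _ = P (k + 1) (f (k + 1)) + ∑' n : ℕ, A k (upT A P f k n) := by
            rw [upT_zero]
            congr 1
            exact tsum_congr (fun n => upT_succ A P f k n)
        _ = A k (∑' n : ℕ, upT A P f k n) + P (k + 1) (f (k + 1)) := by
            rw [hmapped]; abel
    have hunst : ∑ n ∈ Finset.range (-(k + 1)).toNat, uqT A Q f (k + 1) n
        = A k (∑ n ∈ Finset.range (-k).toNat, uqT A Q f k n) - Q (k + 1) (f (k + 1)) := by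
      rw [map_sum, hkt, Finset.sum_range_succ']
      rw [uqT_zero]
      have e : ∀ n ∈ Finset.range (-(k + 1)).toNat,
          A k (uqT A Q f k (n + 1)) = uqT A Q f (k + 1) n :=
        fun n _ => uqT_succ A Q f k n
      rw [Finset.sum_congr rfl e]
      abel
    show (∑' n : ℕ, upT A P f (k + 1) n) -
        ∑ n ∈ Finset.range (-(k + 1)).toNat, uqT A Q f (k + 1) n
        = A k ((∑' n : ℕ, upT A P f k n) - ∑ n ∈ Finset.range (-k).toNat, uqT A Q f k n)
          + f (k + 1)
    rw [hstab, hunst, map_sub]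
    have habel : ∀ a b p q fv : Ed d, p + q = fv → (a + p) - (b - q) = (a - b) + fv := by
      intro a b p q fv hpq
      rw [← hpq]; abel
    exact habel _ _ _ _ _ hPQ1

end NegHalf
/-- hyperbolicity on both half-lines plus transversality implies B_ω(ℤ). -/
theorem hyperbolic_transverse_implies_perron (d : ℕ) (hd : 1 ≤ d) (ω M : ℝ)
    (hω : 0 ≤ ω) (hM : 0 < M)
    (A : ℤ → (Ed d ≃L[ℝ] Ed d))
    (hA : ∀ k : ℤ, ‖(A k : Ed d →L[ℝ] Ed d)‖ ≤ M ∧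
      ‖((A k).symm : Ed d →L[ℝ] Ed d)‖ ≤ M)
    (hplus : IsHyperbolicOn A {k : ℤ | 0 ≤ k})
    (hminus : IsHyperbolicOn A {k : ℤ | k ≤ 0})
    (htrans : ∀ u : Ed d, ∃ v ∈ Bplus A, ∃ w ∈ Bminus A, u = v + w) :
    ∀ f : ℤ → Ed d, (∃ C : ℝ, ∀ k : ℤ, ‖f k‖ * wt ω k ≤ C) →
      ∃ x : ℤ → Ed d, (∃ C : ℝ, ∀ k : ℤ, ‖x k‖ * wt ω k ≤ C) ∧
        ∀ k : ℤ, x (k + 1) = A k (x k) + f (k + 1) := by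
  
  intro f hfC
  obtain ⟨C0, hC0⟩ := hfC
  set Cf := max C0 0 with hCfdef
  have hCf' : ∀ k, ‖f k‖ * wt ω k ≤ Cf := fun k => le_trans (hC0 k) (le_max_left _ _)
  obtain ⟨K1, lam1, P, Q, hp⟩ := hplus
  obtain ⟨K2, lam2, P', Q', hm⟩ := hminus
  obtain ⟨xp, Cp, hxpB, hxpR⟩ := pos_half hω hp f Cf hCf'
  obtain ⟨xm, Cm, hxmB, hxmR⟩ := neg_half hω hm f Cf hCf'
  obtain ⟨v, hv, w, hw, hvw⟩ := htrans (xp 0 - xm 0)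
  have hQ0v : Q 0 v = 0 := bplus_Q_eq_zero hp hv
  have hP0w : P' 0 w = 0 := bminus_P_eq_zero hm hw
  obtain ⟨hK1pos, hl1pos, hl1lt, hPQp, -, -, -, hPp, hQp, hnormp⟩ := id hp
  obtain ⟨hK2pos, hl2pos, hl2lt, hPQm, -, -, -, hPm, hQm, hnormm⟩ := id hm
  have hvrange : v ∈ LinearMap.range (P 0 : Ed d →ₗ[ℝ] Ed d) := by
    have h1 := congrArg (fun T : Ed d →L[ℝ] Ed d => T v)
      (hPQp 0 (Set.mem_setOf.mpr le_rfl))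
    simp only [ContinuousLinearMap.add_apply, ContinuousLinearMap.one_apply] at h1
    rw [hQ0v, add_zero] at h1
    exact ⟨v, h1⟩
  have hwrange : w ∈ LinearMap.range (Q' 0 : Ed d →ₗ[ℝ] Ed d) := by
    have h1 := congrArg (fun T : Ed d →L[ℝ] Ed d => T w)
      (hPQm 0 (Set.mem_setOf.mpr le_rfl))
    simp only [ContinuousLinearMap.add_apply, ContinuousLinearMap.one_apply] at h1
    rw [hP0w, zero_add] at h1
    exact ⟨w, h1⟩
  -- geometric sums
  set g1 : ℕ → ℝ := fun n => ((n : ℝ) + 1) ^ ω * lam1 ^ n with hg1def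
  have hg1 : Summable g1 := summable_wt_geom hω hl1pos hl1lt
  set S1 := ∑' n : ℕ, g1 n with hS1def
  have hg1nn : ∀ n : ℕ, 0 ≤ g1 n := fun n => by simp only [hg1def]; positivity
  have hg1le : ∀ n : ℕ, g1 n ≤ S1 := fun n => Summable.le_tsum hg1 n (fun m _ => hg1nn m)
  set g2 : ℕ → ℝ := fun n => ((n : ℝ) + 1) ^ ω * lam2 ^ n with hg2def
  have hg2 : Summable g2 := summable_wt_geom hω hl2pos hl2lt
  set S2 := ∑' n : ℕ, g2 n with hS2def
  have hg2nn : ∀ n : ℕ, 0 ≤ g2 n := fun n => by simp only [hg2def]; positivity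
  have hg2le : ∀ n : ℕ, g2 n ≤ S2 := fun n => Summable.le_tsum hg2 n (fun m _ => hg2nn m)
  -- weight identities
  have hwtpos : ∀ k : ℤ, 0 ≤ k → wt ω k = ((k.toNat : ℝ) + 1) ^ ω := by
    intro k hk
    unfold wt
    congr 1
    rw [abs_of_nonneg (by exact_mod_cast hk)]
    congr 1
    exact_mod_cast (Int.toNat_of_nonneg hk).symm
  have hwtneg : ∀ k : ℤ, k ≤ 0 → wt ω k = (((-k).toNat : ℝ) + 1) ^ ω := by
    intro k hk
    unfold wt
    congr 1
    rw [abs_of_nonpos (by exact_mod_cast hk)]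
    congr 1
    have : ((-k).toNat : ℤ) = -k := Int.toNat_of_nonneg (by omega)
    exact_mod_cast this.symm
  -- decay of the corrections
  have hvdecay : ∀ k : ℤ, 0 ≤ k → ‖Phi A k 0 v‖ * wt ω k ≤ K1 * ‖v‖ * S1 := by
    intro k hk
    have h1 := hPp 0 (Set.mem_setOf.mpr le_rfl) k (Set.mem_setOf.mpr hk) hk v hvrange
    have e : (k - 0).toNat = k.toNat := by omega
    rw [e] at h1
    rw [hwtpos k hk]
    calc ‖Phi A k 0 v‖ * ((k.toNat : ℝ) + 1) ^ ω
        ≤ (K1 * lam1 ^ k.toNat * ‖v‖) * ((k.toNat : ℝ) + 1) ^ ω :=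
          mul_le_mul_of_nonneg_right h1 (by positivity)
      _ = K1 * ‖v‖ * g1 k.toNat := by rw [hg1def]; ring
      _ ≤ K1 * ‖v‖ * S1 :=
          mul_le_mul_of_nonneg_left (hg1le _) (by positivity)
  have hwdecay : ∀ k : ℤ, k ≤ 0 → ‖Phi A k 0 w‖ * wt ω k ≤ K2 * ‖w‖ * S2 := by
    intro k hk
    have h1 := hQm 0 (Set.mem_setOf.mpr le_rfl) k (Set.mem_setOf.mpr hk) hk w hwrange
    have e : (0 - k).toNat = (-k).toNat := by omega
    rw [e] at h1
    rw [hwtneg k hk]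
    calc ‖Phi A k 0 w‖ * (((-k).toNat : ℝ) + 1) ^ ω
        ≤ (K2 * lam2 ^ (-k).toNat * ‖w‖) * (((-k).toNat : ℝ) + 1) ^ ω :=
          mul_le_mul_of_nonneg_right h1 (by positivity)
      _ = K2 * ‖w‖ * g2 (-k).toNat := by rw [hg2def]; ring
      _ ≤ K2 * ‖w‖ * S2 :=
          mul_le_mul_of_nonneg_left (hg2le _) (by positivity)
  -- the solution
  refine ⟨fun k => if 0 ≤ k then xp k - Phi A k 0 v else xm k + Phi A k 0 w,
    ⟨max (Cp + K1 * ‖v‖ * S1) (Cm + K2 * ‖w‖ * S2), ?_⟩, ?_⟩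
  · intro k
    beta_reduce
    rcases le_or_gt 0 k with hk | hk
    · rw [if_pos hk]
      refine le_trans ?_ (le_max_left _ _)
      calc ‖xp k - Phi A k 0 v‖ * wt ω k
          ≤ (‖xp k‖ + ‖Phi A k 0 v‖) * wt ω k :=
            mul_le_mul_of_nonneg_right (norm_sub_le _ _) (wt_pos ω k).le
        _ = ‖xp k‖ * wt ω k + ‖Phi A k 0 v‖ * wt ω k := by ring
        _ ≤ Cp + K1 * ‖v‖ * S1 := add_le_add (hxpB k hk) (hvdecay k hk)
    · rw [if_neg (by omega)]
      refine le_trans ?_ (le_max_right _ _)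
      have hk0 : k ≤ 0 := by omega
      calc ‖xm k + Phi A k 0 w‖ * wt ω k
          ≤ (‖xm k‖ + ‖Phi A k 0 w‖) * wt ω k :=
            mul_le_mul_of_nonneg_right (norm_add_le _ _) (wt_pos ω k).le
        _ = ‖xm k‖ * wt ω k + ‖Phi A k 0 w‖ * wt ω k := by ring
        _ ≤ Cm + K2 * ‖w‖ * S2 := add_le_add (hxmB k hk0) (hwdecay k hk0)
  · intro k
    beta_reduce
    rcases le_or_gt 0 k with hk | hk
    · rw [if_pos hk, if_pos (by omega : (0:ℤ) ≤ k + 1)]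
      rw [hxpR k hk, phi_succ, map_sub]
      abel
    · rcases lt_or_eq_of_le (by omega : k + 1 ≤ 0) with hk1 | hk1
      · rw [if_neg (by omega), if_neg (by omega)]
        rw [hxmR k (by omega), phi_succ, map_add]
        abel
      · -- k = -1
        have hkm1 : k = -1 := by omega
        subst hkm1
        rw [if_pos (by norm_num : (0:ℤ) ≤ -1 + 1), if_neg (by norm_num : ¬ (0:ℤ) ≤ -1)]
        have e0 : (-1 : ℤ) + 1 = 0 := by norm_num
        rw [e0]
        have hxm0 : xm 0 = A (-1) (xm (-1)) + f 0 := by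
          have h1 := hxmR (-1) (by norm_num)
          rw [e0] at h1
          exact h1
        have hphiw : A (-1) (Phi A (-1) 0 w) = w := by
          have h1 := phi_succ A (-1) 0 w
          rw [e0, phi_self] at h1
          exact h1.symm
        have h3 : xp 0 - v = xm 0 + w := by
          have h4 : xp 0 = xm 0 + (v + w) := by rw [← hvw]; abel
          rw [h4]; abel
        rw [phi_self, map_add, hphiw]
        show xp 0 - v = (A (-1) (xm (-1)) + w) + f 0
        rw [h3, hxm0]
        abel
end
end
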